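/- Setting q = 1 in the third-order recursion operator for the figure-eight knot and substituting Q = M², X = L yields ((−1+L)(L − LM² − M⁴ − 2LM⁴ − L²M⁴ − LM⁶ + LM⁸))/(L³M²(1+M²)²) in ℚ(L,M); in particular, up to multiplication by a rational function of M and a power of L, this equals the A-polynomial A(4₁) = (L−1)(−L + LM² + M⁴ + 2LM⁴ + L²M⁴ + LM⁶ − LM⁸). -/
import Mathlib


/-- The field `ℚ(L,M)` of rational functions in two commuting variables. -/
abbrev KLM : Type := RatFunc (RatFunc ℚ)

/-- The variable `L`. -/
noncomputable def Lv : KLM := RatFunc.X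

/-- The variable `M`. -/
noncomputable def Mv : KLM := RatFunc.C RatFunc.X


lemma poly_ne_zero (p : Polynomial ℚ) (hp : p ≠ 0) :
    (algebraMap (Polynomial ℚ) (RatFunc ℚ)) p ≠ 0 := by
  simpa using (RatFunc.algebraMap_ne_zero hp)

lemma C_ne_zero {x : RatFunc ℚ} (hx : x ≠ 0) : (RatFunc.C x : KLM) ≠ 0 := by
  intro h
  exact hx (RatFunc.C.injective (by simpa using h))

lemma Mv_ne_zero : Mv ≠ 0 := by
  apply C_ne_zero
  exact RatFunc.X_ne_zero

lemma Lv_ne_zero : Lv ≠ 0 := RatFunc.X_ne_zero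

lemma one_add_M2_ne_zero : (1 : KLM) + Mv ^ 2 ≠ 0 := by
  have : (1 : KLM) + Mv ^ 2 = RatFunc.C ((1 : RatFunc ℚ) + RatFunc.X ^ 2) := by
    rw [Mv, map_add, map_one, map_pow]
  rw [this]
  apply C_ne_zero
  have : ((1 : RatFunc ℚ) + RatFunc.X ^ 2) =
      algebraMap (Polynomial ℚ) (RatFunc ℚ) (1 + Polynomial.X ^ 2) := by
    rw [map_add, map_one, map_pow, RatFunc.algebraMap_X]
  rw [this]
  apply poly_ne_zero
  intro h
  have := congrArg (Polynomial.eval 0) h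
  simp at this

lemma one_sub_M4_ne_zero : (1 : KLM) - Mv ^ 4 ≠ 0 := by
  have : (1 : KLM) - Mv ^ 4 = RatFunc.C ((1 : RatFunc ℚ) - RatFunc.X ^ 4) := by
    rw [Mv, map_sub, map_one, map_pow]
  rw [this]
  apply C_ne_zero
  have : ((1 : RatFunc ℚ) - RatFunc.X ^ 4) =
      algebraMap (Polynomial ℚ) (RatFunc ℚ) (1 - Polynomial.X ^ 4) := by
    rw [map_sub, map_one, map_pow, RatFunc.algebraMap_X]
  rw [this]
  apply poly_ne_zero
  intro h
  have := congrArg (Polynomial.eval 0) h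
  simp at this

/-- Substituting `q = 1`, `Q = M²`, `X = L` into the third-order recursion operator
for the figure-eight knot,
`q(−1+Q)Q/((q+Q)(q−Q²)) + q²Q(−q³+Q)/((q²+Q)(−q⁵+Q²)X³)
 − (q²−Q)(q⁸−2q⁶Q+q⁷Q−q³Q²+q⁴Q²−q⁵Q²+qQ³−2q²Q³+Q⁴)/(q²Q(q+Q)(q⁵−Q²)X²)
 + (−q+Q)(q⁴+q²Q−2q³Q−qQ²+q²Q²−q³Q²−2qQ³+q²Q³+Q⁴)/(qQ(q²+Q)(−q+Q²)X)`,
yields `((−1+L)(L−LM²−M⁴−2LM⁴−L²M⁴−LM⁶+LM⁸))/(L³M²(1+M²)²)` in `ℚ(L,M)`; up to a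
rational function of `M` and a power of `L` this is the A-polynomial `A(4₁)`. -/
theorem figure8_operator_at_q_one (q Q X : KLM)
    (hq : q = 1) (hQ : Q = Mv ^ 2) (hX : X = Lv) :
    q * (-1 + Q) * Q / ((q + Q) * (q - Q ^ 2)) +
      q ^ 2 * Q * (-q ^ 3 + Q) / ((q ^ 2 + Q) * (-q ^ 5 + Q ^ 2) * X ^ 3) -
      (q ^ 2 - Q) *
          (q ^ 8 - 2 * q ^ 6 * Q + q ^ 7 * Q - q ^ 3 * Q ^ 2 + q ^ 4 * Q ^ 2 -
            q ^ 5 * Q ^ 2 + q * Q ^ 3 - 2 * q ^ 2 * Q ^ 3 + Q ^ 4) /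
        (q ^ 2 * Q * (q + Q) * (q ^ 5 - Q ^ 2) * X ^ 2) +
      (-q + Q) *
          (q ^ 4 + q ^ 2 * Q - 2 * q ^ 3 * Q - q * Q ^ 2 + q ^ 2 * Q ^ 2 -
            q ^ 3 * Q ^ 2 - 2 * q * Q ^ 3 + q ^ 2 * Q ^ 3 + Q ^ 4) /
        (q * Q * (q ^ 2 + Q) * (-q + Q ^ 2) * X) =
    (-1 + Lv) *
        (Lv - Lv * Mv ^ 2 - Mv ^ 4 - 2 * Lv * Mv ^ 4 - Lv ^ 2 * Mv ^ 4 -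
          Lv * Mv ^ 6 + Lv * Mv ^ 8) /
      (Lv ^ 3 * Mv ^ 2 * (1 + Mv ^ 2) ^ 2) := by
  subst hq hQ hX
  have hM := Mv_ne_zero
  have hL := Lv_ne_zero
  have h1 := one_add_M2_ne_zero
  have h2 := one_sub_M4_ne_zero
  have h3 : (-1 : KLM) + Mv ^ 4 ≠ 0 := by
    intro h; exact h2 (by linear_combination -h)
  have hb1 : ((1 : KLM) + Mv ^ 2) * (1 - (Mv ^ 2) ^ 2) ≠ 0 := by
    intro h
    exact mul_ne_zero h1 h2 (by linear_combination h)
  have hb2 : ((1 : KLM) ^ 2 + Mv ^ 2) * (-1 ^ 5 + (Mv ^ 2) ^ 2) * Lv ^ 3 ≠ 0 := by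
    intro h
    exact mul_ne_zero (mul_ne_zero h1 h3) (pow_ne_zero 3 hL) (by linear_combination h)
  have hb3 : (1 : KLM) ^ 2 * Mv ^ 2 * (1 + Mv ^ 2) * (1 ^ 5 - (Mv ^ 2) ^ 2) * Lv ^ 2 ≠ 0 := by
    intro h
    exact mul_ne_zero (mul_ne_zero (mul_ne_zero (pow_ne_zero 2 hM) h1) h2)
      (pow_ne_zero 2 hL) (by linear_combination h)
  have hb4 : (1 : KLM) * Mv ^ 2 * (1 ^ 2 + Mv ^ 2) * (-1 + (Mv ^ 2) ^ 2) * Lv ≠ 0 := by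
    intro h
    exact mul_ne_zero (mul_ne_zero (mul_ne_zero (pow_ne_zero 2 hM) h1) h3) hL
      (by linear_combination h)
  have hR : Lv ^ 3 * Mv ^ 2 * ((1 : KLM) + Mv ^ 2) ^ 2 ≠ 0 :=
    mul_ne_zero (mul_ne_zero (pow_ne_zero 3 hL) (pow_ne_zero 2 hM)) (pow_ne_zero 2 h1)
  rw [div_add_div _ _ hb1 hb2, div_sub_div _ _ (mul_ne_zero hb1 hb2) hb3,
    div_add_div _ _ (mul_ne_zero (mul_ne_zero hb1 hb2) hb3) hb4,
    div_eq_div_iff (mul_ne_zero (mul_ne_zero (mul_ne_zero hb1 hb2) hb3) hb4) hR]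
  ring
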